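/- Let G be a finite simple graph and k ≥ 1 a natural number. If G contains a cycle of length 3k+1 or a cycle of length 3k+2 (as a subgraph), then for the cubic path ideal I = I_3(G) one has I^(k+1) ≠ I^{k+1}. -/
import Mathlib


open MvPolynomial

/-- The `n`-th symbolic power of an ideal: the intersection of the `n`-th powers of the
minimal primes of `I`. -/
def symbolicPower {R : Type*} [CommRing R] (I : Ideal R) (n : ℕ) : Ideal R :=
  ⨅ p ∈ I.minimalPrimes, p ^ n

/-- The cubic path ideal `I₃(G)` of a graph `G`: the ideal of `k[x_v : v ∈ V]` generated by
the monomials `x_u x_v x_w` over all paths `u–v–w` on three distinct vertices of `G`. -/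
noncomputable def pathIdeal3 (k : Type*) [Field k] {V : Type*} (G : SimpleGraph V) :
    Ideal (MvPolynomial V k) :=
  Ideal.span {m | ∃ u v w : V, G.Adj u v ∧ G.Adj v w ∧ u ≠ w ∧ m = X u * X v * X w}

/-- A product of elements of an ideal `P` over a finset `s` lies in `P ^ s.card`. -/
lemma aux_prod_mem_pow_card {α R : Type*} [CommRing R] (P : Ideal R) (s : Finset α) (f : α → R)
    (h : ∀ a ∈ s, f a ∈ P) : (∏ a ∈ s, f a) ∈ P ^ s.card := by
  classical
  induction s using Finset.induction_on with
  | empty => simp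
  | @insert a s ha ih =>
    rw [Finset.prod_insert ha, Finset.card_insert_of_notMem ha, pow_succ,
      mul_comm (P ^ s.card)]
    exact Ideal.mul_mem_mul (h a (Finset.mem_insert_self a s))
      (ih fun b hb => h b (Finset.mem_insert_of_mem hb))

/-- `getVert` agrees with indexing into the support list. -/
lemma aux_getVert_eq {V : Type*} {G : SimpleGraph V} {u v : V} (p : G.Walk u v) :
    ∀ i, i ≤ p.length → ∀ (h : i < p.support.length), p.getVert i = p.support[i] := by
  induction p with
  | nil =>
    intro i hi h
    simp only [SimpleGraph.Walk.length_nil] at hi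
    obtain rfl : i = 0 := by omega
    simp
  | @cons a b c hadj q ih =>
    intro i hi h
    cases i with
    | zero => simp
    | succ i =>
      rw [SimpleGraph.Walk.getVert_cons_succ]
      simp only [SimpleGraph.Walk.support_cons, List.getElem_cons_succ]
      exact ih i (by simpa using hi)
        (by rw [SimpleGraph.Walk.length_support]
            simp only [SimpleGraph.Walk.length_cons] at hi; omega)

/-- On a cycle, `getVert` is injective on `[0, length)`. -/
lemma aux_cycle_getVert_inj {V : Type*} {G : SimpleGraph V} {v : V} {p : G.Walk v v}
    (hp : p.IsCycle) {i j : ℕ} (hi : i < p.length) (hj : j < p.length)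
    (h : p.getVert i = p.getVert j) : i = j := by
  have hnd : p.support.tail.Nodup := ((SimpleGraph.Walk.isCycle_def p).1 hp).2.2
  have hlen : p.support.length = p.length + 1 := p.length_support
  have htail : p.support.tail.length = p.length := by
    rw [List.length_tail, hlen]; omega
  have key : ∀ a b, 1 ≤ a → a ≤ p.length → 1 ≤ b → b ≤ p.length →
      p.getVert a = p.getVert b → a = b := by
    intro a b ha1 ha2 hb1 hb2 hab
    have ha' : a < p.support.length := by omega
    have hb' : b < p.support.length := by omega
    rw [aux_getVert_eq p a ha2 ha', aux_getVert_eq p b hb2 hb'] at hab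
    have hta : p.support.tail[a - 1]'(by omega) = p.support[a]'ha' := by
      rw [List.getElem_tail]
      congr 1
      omega
    have htb : p.support.tail[b - 1]'(by omega) = p.support[b]'hb' := by
      rw [List.getElem_tail]
      congr 1
      omega
    rw [← hta, ← htb] at hab
    have := (hnd.getElem_inj_iff).1 hab
    omega
  have h0 : p.getVert 0 = p.getVert p.length := by
    rw [SimpleGraph.Walk.getVert_zero, SimpleGraph.Walk.getVert_length]
  by_cases hi0 : i = 0 <;> by_cases hj0 : j = 0
  · omega
  · subst hi0
    have := key p.length j (by omega) le_rfl (by omega) (by omega) (by rw [← h0, h])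
    omega
  · subst hj0
    have := key i p.length (by omega) (by omega) (by omega) le_rfl (by rw [h, h0])
    omega
  · exact key i j (by omega) (by omega) (by omega) (by omega) h

/-- If a finite simple graph `G` contains a cycle of length `3k+1` or of
length `3k+2` (for a natural number `k ≥ 1`), then the cubic path ideal `I = I₃(G)`
satisfies `I⁽ᵏ⁺¹⁾ ≠ Iᵏ⁺¹`. -/
theorem symbolicPower_ne_of_cycle
    (K : Type*) [Field K] {V : Type*} [Fintype V] [DecidableEq V]
    (G : SimpleGraph V) (k : ℕ) (hk : 1 ≤ k)
    (hcycle : ∃ (v : V) (p : G.Walk v v), p.IsCycle ∧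
      (p.length = 3 * k + 1 ∨ p.length = 3 * k + 2)) :
    symbolicPower (pathIdeal3 K G) (k + 1) ≠ (pathIdeal3 K G) ^ (k + 1) := by
  classical
  obtain ⟨v, p, hp, hlen⟩ := hcycle
  set n := p.length with hn
  have hn1 : 3 * k + 1 ≤ n := by omega
  have hn2 : n ≤ 3 * k + 2 := by omega
  have hn4 : 4 ≤ n := by omega
  set I := pathIdeal3 K G with hI
  -- the witness monomial: the product of the variables of the cycle
  set m : MvPolynomial V K := ∏ j ∈ Finset.range n, X (p.getVert j) with hm
  -- adjacency around the cycle, with wraparound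
  have hadj : ∀ i, i < n → G.Adj (p.getVert i) (p.getVert ((i + 1) % n)) := by
    intro i hi
    rcases Nat.lt_or_ge (i + 1) n with hlt | hge
    · rw [Nat.mod_eq_of_lt hlt]
      exact p.adj_getVert_succ (by omega)
    · have hi1 : i + 1 = n := by omega
      have hA := p.adj_getVert_succ (show i < p.length by omega)
      rw [show i + 1 = p.length by omega, SimpleGraph.Walk.getVert_length] at hA
      have h0 : (i + 1) % n = 0 := by rw [hi1]; exact Nat.mod_self n
      rw [h0, SimpleGraph.Walk.getVert_zero]
      exact hA
  -- the consecutive triples of the cycle give generators of the path ideal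
  have hgen : ∀ i, i < n →
      (X (p.getVert i) * X (p.getVert ((i + 1) % n)) * X (p.getVert ((i + 2) % n)) :
        MvPolynomial V K) ∈ I := by
    intro i hi
    apply Ideal.subset_span
    refine ⟨_, _, _, hadj i hi, ?_, ?_, rfl⟩
    · have h1 : (i + 1) % n < n := Nat.mod_lt _ (by omega)
      have := hadj _ h1
      rwa [Nat.mod_add_mod] at this
    · intro hne
      have h2 : (i + 2) % n < n := Nat.mod_lt _ (by omega)
      have hij := aux_cycle_getVert_inj hp (by omega) (by omega : (i + 2) % n < p.length) hne
      rcases Nat.lt_or_ge (i + 2) n with hlt | hge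
      · rw [Nat.mod_eq_of_lt hlt] at hij; omega
      · have hsub : (i + 2) % n = i + 2 - n := by
          rw [Nat.mod_eq_sub_mod hge, Nat.mod_eq_of_lt (by omega)]
        omega
  -- the witness lies in the symbolic power
  have hsym : m ∈ symbolicPower I (k + 1) := by
    unfold symbolicPower
    simp only [Submodule.mem_iInf]
    intro P hP
    have hPprime : P.IsPrime := hP.1.1
    have hIP : I ≤ P := hP.1.2
    -- each minimal prime covers each triple
    have hcov : ∀ i, i < n → ∃ t, t ≤ 2 ∧ X (p.getVert ((i + t) % n)) ∈ P := by
      intro i hi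
      have hmem := hIP (hgen i hi)
      rcases hPprime.mem_or_mem hmem with h | h
      · rcases hPprime.mem_or_mem h with h | h
        · exact ⟨0, by omega, by simpa [Nat.mod_eq_of_lt hi] using h⟩
        · exact ⟨1, by omega, h⟩
      · exact ⟨2, by omega, h⟩
    set T := (Finset.range n).filter (fun j => X (p.getVert j) ∈ P) with hT
    -- counting: T must contain at least k + 1 cycle indices
    have hTcard : k + 1 ≤ T.card := by
      set pre : ℕ → Finset ℕ := fun j =>
        ({(j + (n - 0)) % n, (j + (n - 1)) % n, (j + (n - 2)) % n} : Finset ℕ) with hpre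
      have hsub : Finset.range n ⊆ T.biUnion pre := by
        intro i hi
        rw [Finset.mem_range] at hi
        obtain ⟨t, ht2, htm⟩ := hcov i hi
        have hjlt : (i + t) % n < n := Nat.mod_lt _ (by omega)
        have hjT : (i + t) % n ∈ T := by
          rw [hT, Finset.mem_filter]
          exact ⟨Finset.mem_range.2 hjlt, htm⟩
        rw [Finset.mem_biUnion]
        refine ⟨_, hjT, ?_⟩
        have key : ((i + t) % n + (n - t)) % n = i := by
          calc ((i + t) % n + (n - t)) % n = (i + t + (n - t)) % n := Nat.mod_add_mod _ _ _
            _ = (i + n) % n := by congr 1; omega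
            _ = i % n := Nat.add_mod_right i n
            _ = i := Nat.mod_eq_of_lt hi
        rw [hpre]
        simp only [Finset.mem_insert, Finset.mem_singleton]
        rcases (by omega : t = 0 ∨ t = 1 ∨ t = 2) with rfl | rfl | rfl
        · exact Or.inl key.symm
        · exact Or.inr (Or.inl key.symm)
        · exact Or.inr (Or.inr key.symm)
      have hpre3 : ∀ j, (pre j).card ≤ 3 := by
        intro j
        rw [hpre]
        refine le_trans (Finset.card_insert_le _ _) ?_
        have h2 := Finset.card_insert_le ((j + (n - 1)) % n)
          ({(j + (n - 2)) % n} : Finset ℕ)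
        simp only [Finset.card_singleton] at h2
        omega
      have hcount : n ≤ 3 * T.card := by
        calc n = (Finset.range n).card := (Finset.card_range n).symm
          _ ≤ (T.biUnion pre).card := Finset.card_le_card hsub
          _ ≤ ∑ j ∈ T, (pre j).card := Finset.card_biUnion_le
          _ ≤ ∑ _j ∈ T, 3 := Finset.sum_le_sum fun j _ => hpre3 j
          _ = 3 * T.card := by rw [Finset.sum_const, smul_eq_mul, mul_comm]
      omega
    obtain ⟨T', hT'sub, hT'card⟩ := Finset.exists_subset_card_eq hTcard
    have hT'range : T' ⊆ Finset.range n := hT'sub.trans (Finset.filter_subset _ _)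
    rw [hm, ← Finset.prod_sdiff hT'range]
    apply Ideal.mul_mem_left
    have := aux_prod_mem_pow_card P T' (fun j => X (p.getVert j))
      (fun j hj => (Finset.mem_filter.1 (hT'sub hj)).2)
    rwa [hT'card] at this
  -- the witness does not lie in the ordinary power (degree reasons)
  have hnot : m ∉ I ^ (k + 1) := by
    intro hmem
    set φ : MvPolynomial V K →ₐ[K] Polynomial K := aeval (fun _ => Polynomial.X) with hφ
    have h1 : Ideal.map φ I ≤ Ideal.span {(Polynomial.X : Polynomial K) ^ 3} := by
      rw [hI, pathIdeal3, Ideal.map_span, Ideal.span_le]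
      rintro _ ⟨q, ⟨a, b, c, -, -, -, rfl⟩, rfl⟩
      apply Ideal.subset_span
      rw [Set.mem_singleton_iff, hφ]
      simp only [map_mul, aeval_X]
      ring
    have h2 : φ m ∈ Ideal.span {(Polynomial.X : Polynomial K) ^ 3} ^ (k + 1) :=
      (Ideal.pow_right_mono h1 (k + 1))
        (by rw [← Ideal.map_pow]; exact Ideal.mem_map_of_mem φ hmem)
    rw [Ideal.span_singleton_pow, Ideal.mem_span_singleton] at h2
    have hφm : φ m = Polynomial.X ^ n := by
      rw [hm, map_prod]
      simp [hφ]
    rw [hφm] at h2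
    have hd := Polynomial.natDegree_le_of_dvd h2 (pow_ne_zero _ Polynomial.X_ne_zero)
    simp only [Polynomial.natDegree_pow, Polynomial.natDegree_X, mul_one] at hd
    omega
  intro heq
  exact hnot (heq ▸ hsym)
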